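/- Define v(x, y) = −4xy·log(x² + y²) + 2(x² − y²)·(π/2 − 2·arctan(y/x)) − π(x² + y²) for x ≠ 0, and define w : ℝ² → ℝ by w(x, y) = v(x, y) if x·y ≥ 0 and x ≠ 0; w(x, y) = −v(−x, y) if x < 0 ≤ y; w(x, y) = −v(x, y) if x > 0 ≥ y; and w(0, y) = 0. Set Z̃(x, y) = (w(x, y) − π(x² + y²) + 8xy)/(8π). Then at every point (x, y) with x·y ≠ 0 the function Z̃ is twice differentiable and its Laplacian satisfies ΔZ̃(x, y) = −1 if x·y > 0 and ΔZ̃(x, y) = 0 if x·y < 0. -/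

import Mathlib

open Real

noncomputable section

/-- `v(x,y) = −4xy ln(x²+y²) + 2(x²−y²)(π/2 − 2 arctan(y/x)) − π(x²+y²)`. -/
def vfun (x y : ℝ) : ℝ :=
  -4 * x * y * Real.log (x ^ 2 + y ^ 2)
    + 2 * (x ^ 2 - y ^ 2) * (π / 2 - 2 * Real.arctan (y / x))
    - π * (x ^ 2 + y ^ 2)

/-- The odd reflection `w` of `v`, defined piecewise on the four quadrants. -/
def wfun (x y : ℝ) : ℝ :=
  if 0 ≤ x * y ∧ x ≠ 0 then vfun x y
  else if x < 0 ∧ 0 ≤ y then -vfun (-x) y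
  else if 0 < x ∧ y ≤ 0 then -vfun x y
  else 0

/-- `Z̃(x,y) = (w(x,y) − π(x²+y²) + 8xy)/(8π)`. -/
def Ztilde (x y : ℝ) : ℝ :=
  (wfun x y - π * (x ^ 2 + y ^ 2) + 8 * x * y) / (8 * π)

lemma atan_x (x y : ℝ) (hx : x ≠ 0) :
    HasDerivAt (fun t : ℝ => Real.arctan (y / t)) (-y / (x ^ 2 + y ^ 2)) x := by
  have h := (Real.hasDerivAt_arctan (y / x)).comp x (((hasDerivAt_inv hx).const_mul y))
  simp only [div_eq_mul_inv] at *
  refine h.congr_deriv ?_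
  have hr : x ^ 2 + y ^ 2 ≠ 0 := by positivity
  field_simp

lemma atan_y (x y : ℝ) (hx : x ≠ 0) :
    HasDerivAt (fun t : ℝ => Real.arctan (t / x)) (x / (x ^ 2 + y ^ 2)) y := by
  have h := (Real.hasDerivAt_arctan (y / x)).comp y ((hasDerivAt_id y).div_const x)
  refine h.congr_deriv ?_
  have hr : x ^ 2 + y ^ 2 ≠ 0 := by positivity
  field_simp

lemma log_x (x y : ℝ) (h0 : x ^ 2 + y ^ 2 ≠ 0) :
    HasDerivAt (fun t : ℝ => Real.log (t ^ 2 + y ^ 2)) (2 * x / (x ^ 2 + y ^ 2)) x := by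
  have h := (((hasDerivAt_pow 2 x).add_const (y ^ 2)).log h0)
  convert h using 1
  ring

lemma log_y (x y : ℝ) (h0 : x ^ 2 + y ^ 2 ≠ 0) :
    HasDerivAt (fun t : ℝ => Real.log (x ^ 2 + t ^ 2)) (2 * y / (x ^ 2 + y ^ 2)) y := by
  have h := (((hasDerivAt_pow 2 y).const_add (x ^ 2)).log h0)
  convert h using 1
  ring

def vx (x y : ℝ) : ℝ :=
  -4 * y * Real.log (x ^ 2 + y ^ 2) - 4 * y - 8 * x * Real.arctan (y / x)

def vy (x y : ℝ) : ℝ :=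
  -4 * x * Real.log (x ^ 2 + y ^ 2) - 4 * x + 8 * y * Real.arctan (y / x) - 4 * π * y


lemma hv_x (x y : ℝ) (hx : x ≠ 0) :
    HasDerivAt (fun t => vfun t y) (vx x y) x := by
  have hr : x ^ 2 + y ^ 2 ≠ 0 := by positivity
  have h1 : HasDerivAt (fun t : ℝ => -4 * t * y * Real.log (t ^ 2 + y ^ 2))
      ((-4 * y) * Real.log (x ^ 2 + y ^ 2) + (-4 * x * y) * (2 * x / (x ^ 2 + y ^ 2))) x := by
    have := (((hasDerivAt_id x).const_mul (-4 : ℝ)).mul_const y).mul (log_x x y hr)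
    simp only [id_eq] at this
    refine this.congr_deriv ?_
    ring
  have h2 : HasDerivAt (fun t : ℝ => 2 * (t ^ 2 - y ^ 2) * (π / 2 - 2 * Real.arctan (y / t)))
      ((2 * (2 * x)) * (π / 2 - 2 * Real.arctan (y / x))
        + 2 * (x ^ 2 - y ^ 2) * (-2 * (-y / (x ^ 2 + y ^ 2)))) x := by
    have ha : HasDerivAt (fun t : ℝ => π / 2 - 2 * Real.arctan (y / t))
        (-2 * (-y / (x ^ 2 + y ^ 2))) x := by
      have := ((atan_x x y hx).const_mul (2 : ℝ)).const_sub (π / 2)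
      refine this.congr_deriv ?_; ring
    have hb : HasDerivAt (fun t : ℝ => 2 * (t ^ 2 - y ^ 2)) (2 * (2 * x)) x := by
      have := (((hasDerivAt_pow 2 x)).sub_const (y ^ 2)).const_mul (2 : ℝ)
      refine this.congr_deriv ?_; ring
    have := hb.mul ha
    refine this.congr_deriv ?_; ring
  have h3 : HasDerivAt (fun t : ℝ => π * (t ^ 2 + y ^ 2)) (π * (2 * x)) x := by
    have := (((hasDerivAt_pow 2 x)).add_const (y ^ 2)).const_mul π
    refine this.congr_deriv ?_; ring
  have := (h1.add h2).sub h3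
  refine this.congr_deriv ?_
  unfold vx
  field_simp
  ring

lemma hv_y (x y : ℝ) (hx : x ≠ 0) :
    HasDerivAt (fun t => vfun x t) (vy x y) y := by
  have hr : x ^ 2 + y ^ 2 ≠ 0 := by positivity
  have h1 : HasDerivAt (fun t : ℝ => -4 * x * t * Real.log (x ^ 2 + t ^ 2))
      ((-4 * x) * Real.log (x ^ 2 + y ^ 2) + (-4 * x * y) * (2 * y / (x ^ 2 + y ^ 2))) y := by
    have := (((hasDerivAt_id y).const_mul (-4 * x : ℝ))).mul (log_y x y hr)
    simp only [id_eq] at this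
    refine this.congr_deriv ?_; ring
  have h2 : HasDerivAt (fun t : ℝ => 2 * (x ^ 2 - t ^ 2) * (π / 2 - 2 * Real.arctan (t / x)))
      ((2 * (-(2 * y))) * (π / 2 - 2 * Real.arctan (y / x))
        + 2 * (x ^ 2 - y ^ 2) * (-2 * (x / (x ^ 2 + y ^ 2)))) y := by
    have ha : HasDerivAt (fun t : ℝ => π / 2 - 2 * Real.arctan (t / x))
        (-2 * (x / (x ^ 2 + y ^ 2))) y := by
      have := ((atan_y x y hx).const_mul (2 : ℝ)).const_sub (π / 2)
      refine this.congr_deriv ?_; ring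
    have hb : HasDerivAt (fun t : ℝ => 2 * (x ^ 2 - t ^ 2)) (2 * (-(2 * y))) y := by
      have := (((hasDerivAt_pow 2 y)).const_sub (x ^ 2)).const_mul (2 : ℝ)
      refine this.congr_deriv ?_; ring
    have := hb.mul ha
    refine this.congr_deriv ?_; ring
  have h3 : HasDerivAt (fun t : ℝ => π * (x ^ 2 + t ^ 2)) (π * (2 * y)) y := by
    have := (((hasDerivAt_pow 2 y)).const_add (x ^ 2)).const_mul π
    refine this.congr_deriv ?_; ring
  have := (h1.add h2).sub h3
  refine this.congr_deriv ?_
  unfold vy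
  field_simp
  ring

lemma hvx_x (x y : ℝ) (hx : x ≠ 0) :
    HasDerivAt (fun t => vx t y) (-8 * Real.arctan (y / x)) x := by
  have hr : x ^ 2 + y ^ 2 ≠ 0 := by positivity
  have h1 := (log_x x y hr).const_mul (-4 * y : ℝ)
  have h2 : HasDerivAt (fun t : ℝ => -8 * t * Real.arctan (y / t))
      ((-8 : ℝ) * Real.arctan (y / x) + (-8 * x) * (-y / (x ^ 2 + y ^ 2))) x := by
    have := (((hasDerivAt_id x).const_mul (-8 : ℝ))).mul (atan_x x y hx)
    simp only [id_eq] at this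
    refine this.congr_deriv ?_; ring
  have h := (h1.sub_const (4 * y)).add h2
  have he : (fun t => vx t y)
      = fun t : ℝ => (-4 * y * Real.log (t ^ 2 + y ^ 2) - 4 * y) + -8 * t * Real.arctan (y / t) := by
    funext t; unfold vx; ring
  rw [he]
  refine h.congr_deriv ?_
  field_simp
  ring

lemma hvy_y (x y : ℝ) (hx : x ≠ 0) :
    HasDerivAt (fun t => vy x t) (8 * Real.arctan (y / x) - 4 * π) y := by
  have hr : x ^ 2 + y ^ 2 ≠ 0 := by positivity
  have h1 := (log_y x y hr).const_mul (-4 * x : ℝ)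
  have h2 : HasDerivAt (fun t : ℝ => 8 * t * Real.arctan (t / x))
      ((8 : ℝ) * Real.arctan (y / x) + (8 * y) * (x / (x ^ 2 + y ^ 2))) y := by
    have := (((hasDerivAt_id y).const_mul (8 : ℝ))).mul (atan_y x y hx)
    simp only [id_eq] at this
    refine this.congr_deriv ?_; ring
  have h3 : HasDerivAt (fun t : ℝ => 4 * π * t) (4 * π) y := by
    simpa using (hasDerivAt_id y).const_mul (4 * π : ℝ)
  have h := (((h1.sub_const (4 * x)).add h2).sub h3)
  have he : (fun t => vy x t)
      = fun t : ℝ => ((-4 * x * Real.log (x ^ 2 + t ^ 2) - 4 * x) + 8 * t * Real.arctan (t / x))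
        - 4 * π * t := by
    funext t; unfold vy; ring
  rw [he]
  refine h.congr_deriv ?_
  field_simp
  ring

lemma cv (x y : ℝ) (hx : x ≠ 0) :
    ContDiffAt ℝ 2 (fun p : ℝ × ℝ => vfun p.1 p.2) (x, y) := by
  have hr : x ^ 2 + y ^ 2 ≠ 0 := by positivity
  have h1 : ContDiffAt ℝ 2 (fun p : ℝ × ℝ => p.1 ^ 2 + p.2 ^ 2) (x, y) :=
    ((contDiff_fst.pow 2).add (contDiff_snd.pow 2)).contDiffAt
  have hlog : ContDiffAt ℝ 2 (fun p : ℝ × ℝ => Real.log (p.1 ^ 2 + p.2 ^ 2)) (x, y) :=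
    h1.log hr
  have hat : ContDiffAt ℝ 2 (fun p : ℝ × ℝ => Real.arctan (p.2 / p.1)) (x, y) :=
    Real.contDiff_arctan.contDiffAt.comp (x, y) (contDiffAt_snd.div contDiffAt_fst hx)
  unfold vfun
  exact ((((contDiff_const.mul contDiff_fst).mul contDiff_snd).contDiffAt.mul hlog).add
    ((contDiff_const.mul ((contDiff_fst.pow 2).sub (contDiff_snd.pow 2))).contDiffAt.mul
      ((contDiffAt_const.sub (contDiffAt_const.mul hat))))).sub
    (contDiff_const.mul ((contDiff_fst.pow 2).add (contDiff_snd.pow 2))).contDiffAt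

lemma master (σ ε : ℝ) (hσ : σ = 1 ∨ σ = -1) (hε : ε = 1 ∨ ε = -1)
    (x y : ℝ) (hx : x ≠ 0) (hy : y ≠ 0)
    (hU : (fun p : ℝ × ℝ => Ztilde p.1 p.2) =ᶠ[nhds (x, y)]
      (fun p : ℝ × ℝ =>
        (σ * vfun (ε * p.1) p.2 - π * (p.1 ^ 2 + p.2 ^ 2) + 8 * p.1 * p.2) / (8 * π))) :
    ContDiffAt ℝ 2 (fun p : ℝ × ℝ => Ztilde p.1 p.2) (x, y) ∧
    deriv (fun s => deriv (fun t => Ztilde t y) s) x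
        + deriv (fun s => deriv (fun t => Ztilde x t) s) y = -(σ + 1) / 2 := by
  have hε0 : ε ≠ 0 := by rcases hε with h | h <;> rw [h] <;> norm_num
  have hε2 : ε * ε = 1 := by rcases hε with h | h <;> rw [h] <;> norm_num
  have hX : ε * x ≠ 0 := mul_ne_zero hε0 hx
  constructor
  · -- smoothness
    refine ContDiffAt.congr_of_eventuallyEq ?_ hU
    have hinner : ContDiffAt ℝ 2 (fun p : ℝ × ℝ => (ε * p.1, p.2)) (x, y) :=
      ((contDiff_const.mul contDiff_fst).prodMk contDiff_snd).contDiffAt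
    have hv : ContDiffAt ℝ 2 (fun p : ℝ × ℝ => vfun (ε * p.1) p.2) (x, y) := by
      have := (cv (ε * x) y hX).comp (x, y) hinner
      exact this
    exact (((contDiffAt_const.mul hv).sub
        (contDiff_const.mul ((contDiff_fst.pow 2).add (contDiff_snd.pow 2))).contDiffAt).add
        ((contDiff_const.mul contDiff_fst).mul contDiff_snd).contDiffAt).div_const _
  · -- Laplacian
    set g : ℝ → ℝ := fun t =>
      (σ * vfun (ε * t) y - π * (t ^ 2 + y ^ 2) + 8 * t * y) / (8 * π) with hg
    set gx : ℝ → ℝ := fun t =>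
      (σ * (vx (ε * t) y * ε) - π * (2 * t) + 8 * y) / (8 * π) with hgx
    set g2 : ℝ → ℝ := fun t =>
      (σ * vfun (ε * x) t - π * (x ^ 2 + t ^ 2) + 8 * x * t) / (8 * π) with hg2
    set gy : ℝ → ℝ := fun t =>
      (σ * vy (ε * x) t - π * (2 * t) + 8 * x) / (8 * π) with hgy
    have h1d : (fun t : ℝ => Ztilde t y) =ᶠ[nhds x] g := by
      have ht : Filter.Tendsto (fun t : ℝ => (t, y)) (nhds x) (nhds (x, y)) :=
        (continuous_id.prodMk continuous_const).tendsto x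
      exact hU.comp_tendsto ht
    have h2d : (fun t : ℝ => Ztilde x t) =ᶠ[nhds y] g2 := by
      have ht : Filter.Tendsto (fun t : ℝ => (x, t)) (nhds y) (nhds (x, y)) :=
        (continuous_const.prodMk continuous_id).tendsto y
      exact hU.comp_tendsto ht
    -- derivative of g at nonzero points
    have hder : ∀ t : ℝ, t ≠ 0 → HasDerivAt g (gx t) t := by
      intro t ht
      have hin : HasDerivAt (fun u : ℝ => ε * u) ε t := by
        simpa using (hasDerivAt_id t).const_mul ε
      have h1 : HasDerivAt (fun u : ℝ => vfun (ε * u) y) (vx (ε * t) y * ε) t :=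
        (hv_x (ε * t) y (mul_ne_zero hε0 ht)).comp t hin
      have h2 : HasDerivAt (fun u : ℝ => u ^ 2 + y ^ 2) (2 * t) t := by
        simpa using (hasDerivAt_pow 2 t).add_const (y ^ 2)
      have h3 : HasDerivAt (fun u : ℝ => 8 * u * y) (8 * y) t := by
        have := ((hasDerivAt_id t).const_mul (8 : ℝ)).mul_const y
        simp only [id_eq] at this
        refine this.congr_deriv ?_; ring
      exact (((h1.const_mul σ).sub (h2.const_mul π)).add h3).div_const _
    have hgev : deriv g =ᶠ[nhds x] gx := by
      have hmem : {t : ℝ | t ≠ 0} ∈ nhds x := (isOpen_compl_singleton).mem_nhds hx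
      exact Filter.eventuallyEq_of_mem hmem fun t ht => (hder t ht).deriv
    have hgx' : HasDerivAt gx
        ((σ * ((-8 * Real.arctan (y / (ε * x))) * ε * ε) - π * 2) / (8 * π)) x := by
      have hin : HasDerivAt (fun u : ℝ => ε * u) ε x := by
        simpa using (hasDerivAt_id x).const_mul ε
      have h1 : HasDerivAt (fun u : ℝ => vx (ε * u) y)
          ((-8 * Real.arctan (y / (ε * x))) * ε) x := (hvx_x (ε * x) y hX).comp x hin
      have h2 : HasDerivAt (fun u : ℝ => π * (2 * u)) (π * 2) x := by
        have := (hasDerivAt_id x).const_mul (π * 2 : ℝ)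
        simp only [id_eq, mul_one] at this
        refine this.congr_of_eventuallyEq (Filter.Eventually.of_forall fun u => ?_)
        ring
      have := (((h1.mul_const ε).const_mul σ).sub h2).add_const (8 * y)
      have h := this.div_const (8 * π)
      refine h.congr_deriv ?_; ring
    have hderiv2x : deriv (fun s => deriv (fun t : ℝ => Ztilde t y) s) x
        = (σ * ((-8 * Real.arctan (y / (ε * x))) * ε * ε) - π * 2) / (8 * π) := by
      have e1 : deriv (fun t : ℝ => Ztilde t y) =ᶠ[nhds x] deriv g := h1d.deriv
      calc deriv (fun s => deriv (fun t : ℝ => Ztilde t y) s) x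
          = deriv gx x := (e1.trans hgev).deriv_eq
        _ = _ := hgx'.deriv
    -- y-direction
    have hder2 : ∀ t : ℝ, HasDerivAt g2 (gy t) t := by
      intro t
      have h1 : HasDerivAt (fun u : ℝ => vfun (ε * x) u) (vy (ε * x) t) t := hv_y (ε * x) t hX
      have h2 : HasDerivAt (fun u : ℝ => x ^ 2 + u ^ 2) (2 * t) t := by
        simpa using (hasDerivAt_pow 2 t).const_add (x ^ 2)
      have h3 : HasDerivAt (fun u : ℝ => 8 * x * u) (8 * x) t := by
        have := (hasDerivAt_id t).const_mul (8 * x : ℝ)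
        simp only [id_eq, mul_one] at this
        exact this
      exact (((h1.const_mul σ).sub (h2.const_mul π)).add h3).div_const _
    have hg2ev : deriv g2 = gy := funext fun t => (hder2 t).deriv
    have hgy' : HasDerivAt gy
        ((σ * (8 * Real.arctan (y / (ε * x)) - 4 * π) - π * 2) / (8 * π)) y := by
      have h1 : HasDerivAt (fun u : ℝ => vy (ε * x) u)
          (8 * Real.arctan (y / (ε * x)) - 4 * π) y := hvy_y (ε * x) y hX
      have h2 : HasDerivAt (fun u : ℝ => π * (2 * u)) (π * 2) y := by
        have := (hasDerivAt_id y).const_mul (π * 2 : ℝ)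
        simp only [id_eq, mul_one] at this
        refine this.congr_of_eventuallyEq (Filter.Eventually.of_forall fun u => ?_)
        ring
      exact (((h1.const_mul σ).sub h2).add_const (8 * x)).div_const _
    have hderiv2y : deriv (fun s => deriv (fun t : ℝ => Ztilde x t) s) y
        = (σ * (8 * Real.arctan (y / (ε * x)) - 4 * π) - π * 2) / (8 * π) := by
      have e1 : deriv (fun t : ℝ => Ztilde x t) =ᶠ[nhds y] deriv g2 := h2d.deriv
      have e2 : deriv g2 =ᶠ[nhds y] gy := by rw [hg2ev]
      calc deriv (fun s => deriv (fun t : ℝ => Ztilde x t) s) y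
          = deriv gy y := (e1.trans e2).deriv_eq
        _ = _ := hgy'.deriv
    rw [hderiv2x, hderiv2y]
    have hπ : (π : ℝ) ≠ 0 := Real.pi_ne_zero
    have key : (-8 * Real.arctan (y / (ε * x))) * ε * ε
        = -8 * Real.arctan (y / (ε * x)) := by
      rw [mul_assoc, hε2, mul_one]
    rw [key]
    field_simp
    ring


/-- At every point with `xy ≠ 0`, `Z̃` is twice differentiable and
`ΔZ̃ = −1` on `{xy > 0}` while `ΔZ̃ = 0` on `{xy < 0}`. -/
theorem statement16 (x y : ℝ) (hxy : x * y ≠ 0) :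
    ContDiffAt ℝ 2 (fun p : ℝ × ℝ => Ztilde p.1 p.2) (x, y) ∧
    deriv (fun s => deriv (fun t => Ztilde t y) s) x
        + deriv (fun s => deriv (fun t => Ztilde x t) s) y
      = (if 0 < x * y then -1 else 0) := by
  have hx : x ≠ 0 := fun h => hxy (by simp [h])
  have hy : y ≠ 0 := fun h => hxy (by simp [h])
  rcases hx.lt_or_gt with hx' | hx' <;> rcases hy.lt_or_gt with hy' | hy'
  · -- x < 0, y < 0 : σ = 1, ε = 1
    have hU : (fun p : ℝ × ℝ => Ztilde p.1 p.2) =ᶠ[nhds (x, y)]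
        (fun p : ℝ × ℝ =>
          ((1 : ℝ) * vfun ((1 : ℝ) * p.1) p.2 - π * (p.1 ^ 2 + p.2 ^ 2) + 8 * p.1 * p.2)
            / (8 * π)) := by
      have hUo : IsOpen {p : ℝ × ℝ | p.1 < 0 ∧ p.2 < 0} :=
        (isOpen_lt continuous_fst continuous_const).inter
          (isOpen_lt continuous_snd continuous_const)
      filter_upwards [hUo.mem_nhds ⟨hx', hy'⟩] with p hp
      obtain ⟨ha, hb⟩ := hp
      show Ztilde p.1 p.2 = _
      unfold Ztilde wfun
      rw [if_pos ⟨(mul_pos_of_neg_of_neg ha hb).le, ha.ne⟩]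
      simp only [one_mul]
    obtain ⟨h1, h2⟩ := master 1 1 (Or.inl rfl) (Or.inl rfl) x y hx hy hU
    refine ⟨h1, ?_⟩
    rw [h2, if_pos (mul_pos_of_neg_of_neg hx' hy')]
    norm_num
  · -- x < 0 < y : σ = -1, ε = -1
    have hU : (fun p : ℝ × ℝ => Ztilde p.1 p.2) =ᶠ[nhds (x, y)]
        (fun p : ℝ × ℝ =>
          ((-1 : ℝ) * vfun ((-1 : ℝ) * p.1) p.2 - π * (p.1 ^ 2 + p.2 ^ 2) + 8 * p.1 * p.2)
            / (8 * π)) := by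
      have hUo : IsOpen {p : ℝ × ℝ | p.1 < 0 ∧ 0 < p.2} :=
        (isOpen_lt continuous_fst continuous_const).inter
          (isOpen_lt continuous_const continuous_snd)
      filter_upwards [hUo.mem_nhds ⟨hx', hy'⟩] with p hp
      obtain ⟨ha, hb⟩ := hp
      show Ztilde p.1 p.2 = _
      unfold Ztilde wfun
      rw [if_neg (fun h => absurd h.1 (not_le.mpr (mul_neg_of_neg_of_pos ha hb))),
        if_pos ⟨ha, hb.le⟩]
      simp only [neg_one_mul]
    obtain ⟨h1, h2⟩ := master (-1) (-1) (Or.inr rfl) (Or.inr rfl) x y hx hy hU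
    refine ⟨h1, ?_⟩
    rw [h2, if_neg (not_lt.mpr (mul_neg_of_neg_of_pos hx' hy').le)]
    norm_num
  · -- 0 < x, y < 0 : σ = -1, ε = 1
    have hU : (fun p : ℝ × ℝ => Ztilde p.1 p.2) =ᶠ[nhds (x, y)]
        (fun p : ℝ × ℝ =>
          ((-1 : ℝ) * vfun ((1 : ℝ) * p.1) p.2 - π * (p.1 ^ 2 + p.2 ^ 2) + 8 * p.1 * p.2)
            / (8 * π)) := by
      have hUo : IsOpen {p : ℝ × ℝ | 0 < p.1 ∧ p.2 < 0} :=
        (isOpen_lt continuous_const continuous_fst).inter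
          (isOpen_lt continuous_snd continuous_const)
      filter_upwards [hUo.mem_nhds ⟨hx', hy'⟩] with p hp
      obtain ⟨ha, hb⟩ := hp
      show Ztilde p.1 p.2 = _
      unfold Ztilde wfun
      rw [if_neg (fun h => absurd h.1 (not_le.mpr (mul_neg_of_pos_of_neg ha hb))),
        if_neg (fun h => absurd h.1 (not_lt.mpr ha.le)), if_pos ⟨ha, hb.le⟩]
      simp only [neg_one_mul, one_mul]
    obtain ⟨h1, h2⟩ := master (-1) 1 (Or.inr rfl) (Or.inl rfl) x y hx hy hU
    refine ⟨h1, ?_⟩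
    rw [h2, if_neg (not_lt.mpr (mul_neg_of_pos_of_neg hx' hy').le)]
    norm_num
  · -- 0 < x, 0 < y : σ = 1, ε = 1
    have hU : (fun p : ℝ × ℝ => Ztilde p.1 p.2) =ᶠ[nhds (x, y)]
        (fun p : ℝ × ℝ =>
          ((1 : ℝ) * vfun ((1 : ℝ) * p.1) p.2 - π * (p.1 ^ 2 + p.2 ^ 2) + 8 * p.1 * p.2)
            / (8 * π)) := by
      have hUo : IsOpen {p : ℝ × ℝ | 0 < p.1 ∧ 0 < p.2} :=
        (isOpen_lt continuous_const continuous_fst).inter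
          (isOpen_lt continuous_const continuous_snd)
      filter_upwards [hUo.mem_nhds ⟨hx', hy'⟩] with p hp
      obtain ⟨ha, hb⟩ := hp
      show Ztilde p.1 p.2 = _
      unfold Ztilde wfun
      rw [if_pos ⟨(mul_pos ha hb).le, ha.ne'⟩]
      simp only [one_mul]
    obtain ⟨h1, h2⟩ := master 1 1 (Or.inl rfl) (Or.inl rfl) x y hx hy hU
    refine ⟨h1, ?_⟩
    rw [h2, if_pos (mul_pos hx' hy')]
    norm_num
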